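/- Let m, n be coprime positive integers. There is a bijection α from (m,n)-Dyck paths to (m,n)-cores, where α(D) is the unique partition whose first-column hook lengths are exactly the positive ranks of the lattice points lying strictly to the right of D inside the m×n rectangle (equivalently, the positive integers of the form a*m - b*n, 0 ≤ b < m, 0 ≤ a < n, that lie above/right of D). -/

import Mathlib

open Nat

/-- Number of north steps among the first `i` steps of the path `P`
(`true` = north step `N`, `false` = east step `E`). -/
def nSteps (P : List Bool) (i : ℕ) : ℕ := (P.take i).count true

/-- Number of east steps among the first `i` steps. -/
def eSteps (P : List Bool) (i : ℕ) : ℕ := (P.take i).count false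

/-- Rank `m*b - n*a` of the `i`-th lattice point `(a,b)` of the path. -/
def rank (m n : ℕ) (P : List Bool) (i : ℕ) : ℤ :=
  (m : ℤ) * nSteps P i - (n : ℤ) * eSteps P i

/-- A lattice path from `(0,0)` to `(m,n)`: `m+n` unit steps, `n` of them north. -/
def IsPath (m n : ℕ) (P : List Bool) : Prop :=
  P.length = m + n ∧ P.count true = n

/-- An `(m,n)`-Dyck path: a path staying weakly above the diagonal,
equivalently with all ranks nonnegative. -/
def IsDyck (m n : ℕ) (P : List Bool) : Prop :=
  IsPath m n P ∧ ∀ i ≤ m + n, 0 ≤ rank m n P i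

/-- The set of ranks of the first `m+n` lattice points of the path. -/
def rankSet (m n : ℕ) (P : List Bool) : Finset ℤ :=
  (Finset.range (m + n)).image (rank m n P)

/-- Ranks of south ends (starting points of north steps). -/
def southRanks (m n : ℕ) (P : List Bool) : Finset ℤ :=
  ((Finset.range (m + n)).filter (fun i => P.getD i false = true)).image (rank m n P)

/-- Ranks of west ends (starting points of east steps). -/
def westRanks (m n : ℕ) (P : List Bool) : Finset ℤ :=
  ((Finset.range (m + n)).filter (fun i => P.getD i true = false)).image (rank m n P)

/-- Transpose of a path: reverse the word and exchange `N` and `E`. -/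
def transpose (P : List Bool) : List Bool := (P.map (fun b => !b)).reverse

/-- `D'` is the rank complement of `D`: its rank set is `M - r(D)`
where `M` is the maximum rank of `D`. -/
def IsRankComplement (m n : ℕ) (D D' : List Bool) : Prop :=
  ∃ M : ℤ, IsGreatest (↑(rankSet m n D) : Set ℤ) M ∧
    rankSet m n D' = (rankSet m n D).image (fun r => M - r)

/-- A partition, encoded as a weakly decreasing list of positive integers. -/
def IsPartition (L : List ℕ) : Prop :=
  L.Pairwise (· ≥ ·) ∧ ∀ x ∈ L, 0 < x

/-- Hook length of the cell in (0-based) row `i`, column `j`. -/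
def hook (L : List ℕ) (i j : ℕ) : ℕ :=
  L.getD i 0 - j + (L.drop (i + 1)).countP (fun x => decide (j < x))

/-- `L` is an `n`-core: no hook length is divisible by `n`. -/
def IsCore (n : ℕ) (L : List ℕ) : Prop :=
  ∀ i < L.length, ∀ j < L.getD i 0, ¬ (n ∣ hook L i j)

/-- The set of first-column hook lengths of `L`. -/
def firstColHooks (L : List ℕ) : Finset ℕ :=
  (Finset.range L.length).image (fun i => hook L i 0)

/-- Conjugate (transpose) partition. -/
def conjugate (L : List ℕ) : List ℕ :=
  (List.range (L.getD 0 0)).map (fun j => L.countP (fun x => decide (j < x)))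

/-- `H` is `n`-flush: no element is a multiple of `n`, and it is closed
under subtracting `n` while staying positive. -/
def IsFlush (n : ℕ) (H : Finset ℕ) : Prop :=
  (∀ h ∈ H, ¬ (n ∣ h)) ∧ ∀ h ∈ H, n < h → h - n ∈ H

/-- `s_i^n(H)`: the maximum of `((n+H) ∪ {i}) ∩ (i + nℤ)`. -/
def sFun (n : ℕ) (H : Finset ℕ) (i : ℕ) : ℕ :=
  (insert i ((H.filter (fun h => h % n = i % n)).image (fun h => h + n))).max'
    (Finset.insert_nonempty _ _)

/-- `S^n(H) = {s_0, ..., s_{n-1}}`. -/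
def sSet (n : ℕ) (H : Finset ℕ) : Finset ℕ := (Finset.range n).image (sFun n H)

/-- The lattice point `(a,b)` lies strictly to the right of the path `D`
inside the `m × n` rectangle: every lattice point of `D` at height `b`
has `x`-coordinate less than `a`. -/
def StrictlyRightOf (m n : ℕ) (D : List Bool) (a b : ℕ) : Prop :=
  a ≤ m ∧ b ≤ n ∧ ∀ i ≤ m + n, (D.take i).count true = b → (D.take i).count false < a

/-- The positive ranks of lattice points lying strictly to the right of `D`. -/
def andersonSet (m n : ℕ) (D : List Bool) : Set ℕ :=
  {h | 0 < h ∧ ∃ a b : ℕ, StrictlyRightOf m n D a b ∧ (h : ℤ) = (m : ℤ) * b - (n : ℤ) * a}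

/-- The `x`-coordinate of the vertical step of `D` at height `y`
(the number of east steps taken at heights `≤ y`). -/
def southX (D : List Bool) (y : ℕ) : ℕ :=
  (List.range D.length).countP
    (fun i => decide (D.getD i true = false ∧ (D.take i).count true ≤ y))

/-- The partition formed by the cells above the path `D`
inside a rectangle of height `n`. -/
def pathPartition (n : ℕ) (D : List Bool) : List ℕ :=
  (((List.range n).reverse).map (fun y => southX D y)).filter (fun x => decide (0 < x))

/-- Arm of the cell `(i,j)` of `L`. -/
def armL (L : List ℕ) (i j : ℕ) : ℕ := L.getD i 0 - (j + 1)

/-- Leg of the cell `(i,j)` of `L`. -/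
def legL (L : List ℕ) (i j : ℕ) : ℕ := (L.drop (i + 1)).countP (fun x => decide (j < x))

/-- The dinv statistic of an `(m,n)`-Dyck path: the number of cells `c` of the
partition above the path with `arm(c)/(leg(c)+1) ≤ m/n < (arm(c)+1)/leg(c)`. -/
def dinv (m n : ℕ) (D : List Bool) : ℕ :=
  ((Finset.range (pathPartition n D).length ×ˢ Finset.range m).filter
    (fun p => p.2 < (pathPartition n D).getD p.1 0 ∧
      armL (pathPartition n D) p.1 p.2 * n ≤ m * (legL (pathPartition n D) p.1 p.2 + 1) ∧
      m * legL (pathPartition n D) p.1 p.2 < n * (armL (pathPartition n D) p.1 p.2 + 1))).card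

/-- `codinv(D) = #{(r_s, r_w) : r_s ∈ S(D), r_w ∈ W(D), r_s < r_w}`. -/
def codinv (m n : ℕ) (D : List Bool) : ℕ :=
  ((southRanks m n D ×ˢ westRanks m n D).filter (fun p => p.1 < p.2)).card

/-- The skew length of an `(m,n)`-core: the number of cells lying both in an
`n`-row (a row `i` with `h_i + n ∈ S^n(H_λ)`) and in the `m`-boundary
(hook length `< m`). -/
def skewLength (m n : ℕ) (L : List ℕ) : ℕ :=
  ((Finset.range L.length ×ˢ Finset.range (L.headD 0)).filter
    (fun p => p.2 < L.getD p.1 0 ∧ hook L p.1 p.2 < m ∧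
      hook L p.1 0 + n ∈ sSet n (firstColHooks L))).card
/-! Bridge: countP over a list as a Finset card. -/
lemma countP_eq_card_filter {α : Type*} (d : α) (p : α → Bool) :
    ∀ l : List α, l.countP p =
      ((Finset.range l.length).filter (fun k => p (l.getD k d) = true)).card := by
  intro l
  induction l using List.reverseRecOn with
  | nil => simp
  | append_singleton l a ih =>
    rw [List.countP_append, ih]
    simp only [List.length_append, List.length_singleton, Finset.range_add_one]
    rw [Finset.filter_insert]
    have hgetl : ∀ k < l.length, (l ++ [a]).getD k d = l.getD k d := by
      intro k hk
      simp only [List.getD]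
      rw [List.getElem?_append_left hk]
    have hgeta : (l ++ [a]).getD l.length d = a := by
      simp [List.getD, List.getElem?_append_right (le_refl l.length)]
    have hfilter : (Finset.range l.length).filter
        (fun k => p ((l ++ [a]).getD k d) = true) =
        (Finset.range l.length).filter (fun k => p (l.getD k d) = true) := by
      apply Finset.filter_congr
      intro k hk
      rw [Finset.mem_range] at hk
      rw [hgetl k hk]
    by_cases hpa : p a = true
    · rw [if_pos (by rw [hgeta]; exact hpa)]
      rw [Finset.card_insert_of_notMem (by simp), hfilter]
      simp [List.countP_cons, hpa]
    · rw [if_neg (by rw [hgeta]; exact hpa)]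
      rw [hfilter]
      simp [List.countP_cons, hpa]

lemma countP_drop_eq (p : ℕ → Bool) (l : List ℕ) (i : ℕ) :
    (l.drop i).countP p =
      ((Finset.Ico i l.length).filter (fun k => p (l.getD k 0) = true)).card := by
  rw [countP_eq_card_filter 0]
  rw [List.length_drop]
  have : Finset.Ico i l.length = (Finset.range (l.length - i)).image (fun t => i + t) := by
    ext x
    simp only [Finset.mem_Ico, Finset.mem_image, Finset.mem_range]
    constructor
    · rintro ⟨h1, h2⟩; exact ⟨x - i, by omega, by omega⟩
    · rintro ⟨t, ht, rfl⟩; omega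
  rw [this, Finset.filter_image]
  rw [Finset.card_image_of_injective _ (add_right_injective i)]
  congr 1
  apply Finset.filter_congr
  intro t _
  simp [List.getD, List.getElem?_drop]


/-! ### Partition basics -/

lemma getD_eq' {α : Type*} (d : α) (L : List α) {i : ℕ} (hi : i < L.length) :
    L.getD i d = L[i] := List.getD_eq_getElem L d hi

lemma getD_eq_getElem' (L : List ℕ) {i : ℕ} (hi : i < L.length) :
    L.getD i 0 = L[i] := List.getD_eq_getElem L 0 hi

lemma part_pos {L : List ℕ} (h : IsPartition L) {i : ℕ} (hi : i < L.length) :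
    0 < L.getD i 0 := by
  rw [getD_eq_getElem' L hi]
  exact h.2 _ (List.getElem_mem hi)

lemma part_anti {L : List ℕ} (h : IsPartition L) {i j : ℕ} (hij : i ≤ j)
    (hj : j < L.length) : L.getD j 0 ≤ L.getD i 0 := by
  rcases eq_or_lt_of_le hij with rfl | hij'
  · rfl
  · rw [getD_eq_getElem' L hj, getD_eq_getElem' L (lt_trans hij' hj)]
    exact List.pairwise_iff_getElem.mp h.1 i j _ hj hij'

lemma hook_col0 {L : List ℕ} (h : IsPartition L) {i : ℕ} (hi : i < L.length) :
    hook L i 0 = L.getD i 0 + (L.length - 1 - i) := by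
  unfold hook
  have : (L.drop (i + 1)).countP (fun x => decide (0 < x)) = (L.drop (i+1)).length := by
    rw [List.countP_eq_length]
    intro a ha
    exact decide_eq_true (h.2 a (List.mem_of_mem_drop ha))
  rw [this, List.length_drop]
  omega

lemma hook_col0_anti {L : List ℕ} (h : IsPartition L) {i j : ℕ} (hij : i < j)
    (hj : j < L.length) : hook L j 0 < hook L i 0 := by
  rw [hook_col0 h hj, hook_col0 h (lt_trans hij hj)]
  have := part_anti h (le_of_lt hij) hj
  omega

lemma hook_col0_pos {L : List ℕ} (h : IsPartition L) {i : ℕ} (hi : i < L.length) :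
    0 < hook L i 0 := by
  rw [hook_col0 h hi]
  have := part_pos h hi
  omega

lemma mem_firstColHooks {L : List ℕ} {x : ℕ} :
    x ∈ firstColHooks L ↔ ∃ i < L.length, hook L i 0 = x := by
  simp [firstColHooks]

lemma card_firstColHooks {L : List ℕ} (h : IsPartition L) :
    (firstColHooks L).card = L.length := by
  rw [firstColHooks, Finset.card_image_of_injOn, Finset.card_range]
  intro a ha b hb hab
  rw [Finset.mem_coe, Finset.mem_range] at ha hb
  by_contra hne
  rcases lt_or_gt_of_ne hne with h' | h'
  · exact absurd hab (_root_.ne_of_gt (hook_col0_anti h h' hb))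
  · exact absurd hab (_root_.ne_of_lt (hook_col0_anti h h' ha))

/-! ### From a finite set of positive integers to a partition -/

def partOfH (H : Finset ℕ) : List ℕ :=
  (List.range H.card).map
    (fun i => (H.sort (· ≤ ·)).getD (H.card - 1 - i) 0 - (H.card - 1 - i))

lemma sorted_lt_getD_ge {s : List ℕ} (hs : List.Pairwise (· < ·) s) :
    ∀ a b : ℕ, a ≤ b → b < s.length → s.getD a 0 + (b - a) ≤ s.getD b 0 := by
  intro a b hab
  induction b, hab using Nat.le_induction with
  | base => intro hb; omega
  | succ b hab ih =>
    intro hb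
    have h1 : s.getD b 0 + (b - a) ≤ s.getD b 0 + 0 + (b-a) := by omega
    have hb' : b < s.length := by omega
    have ihb := ih hb'
    have hlt : s.getD b 0 < s.getD (b+1) 0 := by
      rw [getD_eq_getElem' s hb, getD_eq_getElem' s hb']
      exact List.pairwise_iff_getElem.mp hs b (b+1) hb' hb (by omega)
    omega

section partOfH
variable {H : Finset ℕ} (hpos : ∀ h ∈ H, 0 < h)

lemma length_partOfH : (partOfH H).length = H.card := by simp [partOfH]

lemma getD_partOfH {i : ℕ} (hi : i < H.card) :
    (partOfH H).getD i 0 =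
      (H.sort (· ≤ ·)).getD (H.card - 1 - i) 0 - (H.card - 1 - i) := by
  rw [getD_eq_getElem' _ (by simpa [partOfH] using hi)]
  simp [partOfH, hi]

include hpos in
lemma sort_getD_big {a : ℕ} (ha : a < H.card) :
    a + 1 ≤ (H.sort (· ≤ ·)).getD a 0 := by
  have hlen : (H.sort (· ≤ ·)).length = H.card := Finset.length_sort _
  have h0 := sorted_lt_getD_ge (Finset.sortedLT_sort H).pairwise 0 a (Nat.zero_le _) (by omega)
  have hmem : (H.sort (· ≤ ·)).getD 0 0 ∈ H := by
    rw [← Finset.mem_sort (α := ℕ) (· ≤ ·)]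
    rw [getD_eq_getElem' _ (by omega)]
    exact List.getElem_mem _
  have := hpos _ hmem
  omega

include hpos in
lemma isPartition_partOfH : IsPartition (partOfH H) := by
  constructor
  · rw [List.pairwise_iff_getElem]
    intro i j hi hj hij
    rw [show (partOfH H).length = H.card from length_partOfH] at hj
    have hi' : i < H.card := by omega
    rw [← getD_eq_getElem' _ (by simpa [partOfH] using hi'),
        ← getD_eq_getElem' _ (by simpa [partOfH] using hj),
        getD_partOfH hi', getD_partOfH hj]
    have hs := sorted_lt_getD_ge (Finset.sortedLT_sort H).pairwise (H.card - 1 - j)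
      (H.card - 1 - i) (by omega) (by rw [Finset.length_sort]; omega)
    have := sort_getD_big hpos (show H.card - 1 - j < H.card by omega)
    omega
  · intro x hx
    rw [List.mem_iff_getElem] at hx
    obtain ⟨i, hi, rfl⟩ := hx
    rw [show (partOfH H).length = H.card from length_partOfH] at hi
    rw [← getD_eq_getElem' _ (by simpa [partOfH] using hi), getD_partOfH hi]
    have := sort_getD_big hpos (show H.card - 1 - i < H.card by omega)
    omega

include hpos in
lemma hook_partOfH {i : ℕ} (hi : i < H.card) :
    hook (partOfH H) i 0 = (H.sort (· ≤ ·)).getD (H.card - 1 - i) 0 := by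
  rw [hook_col0 (isPartition_partOfH hpos) (by rwa [length_partOfH]),
      getD_partOfH hi, length_partOfH]
  have := sort_getD_big hpos (show H.card - 1 - i < H.card by omega)
  omega

include hpos in
lemma firstColHooks_partOfH : firstColHooks (partOfH H) = H := by
  ext x
  rw [mem_firstColHooks, length_partOfH]
  constructor
  · rintro ⟨i, hi, rfl⟩
    rw [hook_partOfH hpos hi, ← Finset.mem_sort (α := ℕ) (· ≤ ·),
        getD_eq_getElem' _ (by rw [Finset.length_sort]; omega)]
    exact List.getElem_mem _
  · intro hx
    rw [← Finset.mem_sort (α := ℕ) (· ≤ ·), List.mem_iff_getElem] at hx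
    obtain ⟨a, ha, rfl⟩ := hx
    rw [Finset.length_sort] at ha
    refine ⟨H.card - 1 - a, by omega, ?_⟩
    rw [hook_partOfH hpos (by omega)]
    rw [getD_eq_getElem' _ (by rw [Finset.length_sort]; omega)]
    congr 1
    omega
end partOfH

lemma partOfH_firstColHooks {L : List ℕ} (h : IsPartition L) :
    partOfH (firstColHooks L) = L := by
  set k := L.length with hk
  have hcard : (firstColHooks L).card = k := card_firstColHooks h
  -- the sorted list of hooks
  have key : (firstColHooks L).sort (· ≤ ·) =
      (List.range k).map (fun a => hook L (k - 1 - a) 0) := by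
    refine (fun hp h1 h2 => List.Perm.eq_of_pairwise' (r := (· ≤ ·)) h1 h2 hp) ?_ ?_ ?_
    · apply List.perm_of_nodup_nodup_toFinset_eq
      · exact Finset.sort_nodup _ _
      · refine List.Nodup.map_on ?_ (List.nodup_range (n := k))
        intro a ha b hb hab
        rw [List.mem_range] at ha hb
        by_contra hne
        rcases lt_or_gt_of_ne hne with h' | h'
        · exact absurd hab (_root_.ne_of_lt (hook_col0_anti h (by omega) (by omega)))
        · exact absurd hab (_root_.ne_of_gt (hook_col0_anti h (by omega) (by omega)))
      · rw [Finset.sort_toFinset]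
        ext x
        rw [List.mem_toFinset, List.mem_map, mem_firstColHooks]
        constructor
        · rintro ⟨i, hi, rfl⟩
          exact ⟨k - 1 - i, by rw [List.mem_range]; omega, by congr 1; omega⟩
        · rintro ⟨a, ha, rfl⟩
          rw [List.mem_range] at ha
          exact ⟨k - 1 - a, by omega, rfl⟩
    · exact Finset.pairwise_sort _ _
    · rw [List.pairwise_iff_getElem]
      intro a b ha hb hab
      rw [List.length_map, List.length_range] at hb
      simp only [List.getElem_map, List.getElem_range]
      exact le_of_lt (hook_col0_anti h (by omega) (by omega))
  apply List.ext_getElem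
  · rw [length_partOfH, hcard]
  · intro i hi hi'
    rw [length_partOfH, hcard] at hi
    have hpos : ∀ x ∈ firstColHooks L, 0 < x := by
      intro x hx
      rw [mem_firstColHooks] at hx
      obtain ⟨j, hj, rfl⟩ := hx
      exact hook_col0_pos h hj
    rw [← getD_eq_getElem' _ (by rw [length_partOfH, hcard]; exact hi),
        getD_partOfH (by omega), hcard, key]
    have hik : k - 1 - i < k := by omega
    rw [getD_eq_getElem' _ (by rw [List.length_map, List.length_range]; omega)]
    simp only [List.getElem_map, List.getElem_range]
    have : k - 1 - (k - 1 - i) = i := by omega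
    rw [this, hook_col0 h (by omega), ← getD_eq_getElem' _ hi']
    omega

/-! ### Cores vs flush sets -/

lemma firstColHooks_pos {L : List ℕ} (h : IsPartition L) :
    ∀ x ∈ firstColHooks L, 0 < x := by
  intro x hx
  rw [mem_firstColHooks] at hx
  obtain ⟨j, hj, rfl⟩ := hx
  exact hook_col0_pos h hj

section rowHooks
variable {L : List ℕ} (hL : IsPartition L) {i : ℕ} (hi : i < L.length)

/-- Hooks of the rows strictly below row `i`. -/
def Hgt (L : List ℕ) (i : ℕ) : Finset ℕ :=
  (Finset.Ico (i+1) L.length).image (fun k => hook L k 0)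

include hL hi in
lemma hook_formula {j : ℕ} :
    hook L i j = L.getD i 0 - j +
      ((Finset.Ico (i+1) L.length).filter (fun k => j < L.getD k 0)).card := by
  unfold hook
  congr 1
  rw [countP_drop_eq]
  congr 1
  apply Finset.filter_congr
  intro k _
  simp

include hL hi in
lemma hook_le {j : ℕ} (hj : j < L.getD i 0) :
    1 ≤ hook L i j ∧ hook L i j ≤ hook L i 0 := by
  rw [hook_formula hL hi, hook_col0 hL hi]
  have hc : ((Finset.Ico (i+1) L.length).filter (fun k => j < L.getD k 0)).card
      ≤ L.length - 1 - i := by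
    calc _ ≤ (Finset.Ico (i+1) L.length).card := Finset.card_filter_le _ _
    _ = _ := by rw [Nat.card_Ico]; omega
  omega

include hL hi in
lemma hook_row_strict_anti {j j' : ℕ} (hjj' : j < j') (hj' : j' < L.getD i 0) :
    hook L i j' < hook L i j := by
  rw [hook_formula hL hi, hook_formula hL hi]
  have hsub : ((Finset.Ico (i+1) L.length).filter (fun k => j' < L.getD k 0)).card
      ≤ ((Finset.Ico (i+1) L.length).filter (fun k => j < L.getD k 0)).card := by
    apply Finset.card_le_card
    intro k hk
    rw [Finset.mem_filter] at hk ⊢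
    exact ⟨hk.1, by omega⟩
  omega

include hL hi in
lemma hook_add_hook_ne {j k : ℕ} (hj : j < L.getD i 0) (hk1 : i < k)
    (hk2 : k < L.length) : hook L i j + hook L k 0 ≠ hook L i 0 := by
  rw [hook_formula hL hi, hook_col0 hL hi, hook_col0 hL hk2]
  set c := ((Finset.Ico (i+1) L.length).filter (fun k => j < L.getD k 0)).card with hc
  rcases le_or_gt (L.getD k 0) j with hcase | hcase
  · -- c ≤ k - i - 1, sum < hook i 0
    have hcb : c ≤ k - i - 1 := by
      rw [hc]
      calc _ ≤ (Finset.Ico (i+1) k).card := by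
            apply Finset.card_le_card
            intro k' hk'
            simp only [Finset.mem_filter, Finset.mem_Ico] at hk' ⊢
            refine ⟨hk'.1.1, ?_⟩
            by_contra hge
            push_neg at hge
            have := part_anti hL hge hk'.1.2
            omega
      _ = _ := by rw [Nat.card_Ico]; omega
    omega
  · -- c ≥ k - i, sum > hook i 0
    have hcb : k - i ≤ c := by
      rw [hc]
      calc k - i = (Finset.Icc (i+1) k).card := by rw [Nat.card_Icc]; omega
      _ ≤ _ := by
            apply Finset.card_le_card
            intro k' hk'
            simp only [Finset.mem_filter, Finset.mem_Icc, Finset.mem_Ico] at hk' ⊢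
            refine ⟨⟨hk'.1, by omega⟩, ?_⟩
            have := part_anti hL hk'.2 hk2
            omega
    have := part_anti hL (le_of_lt hk1) hk2
    omega

include hL hi in
lemma Hgt_sub {x : ℕ} (hx : x ∈ Hgt L i) : 1 ≤ x ∧ x < hook L i 0 := by
  rw [Hgt, Finset.mem_image] at hx
  obtain ⟨k, hk, rfl⟩ := hx
  rw [Finset.mem_Ico] at hk
  exact ⟨hook_col0_pos hL hk.2, hook_col0_anti hL (by omega) hk.2⟩

include hL hi in
lemma card_Hgt : (Hgt L i).card = L.length - 1 - i := by
  rw [Hgt, Finset.card_image_of_injOn, Nat.card_Ico]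
  · omega
  · intro a ha b hb hab
    rw [Finset.coe_Ico, Set.mem_Ico] at ha hb
    by_contra hne
    rcases lt_or_gt_of_ne hne with h' | h'
    · exact absurd hab (_root_.ne_of_gt (hook_col0_anti hL h' hb.2))
    · exact absurd hab (_root_.ne_of_lt (hook_col0_anti hL h' ha.2))

include hL hi in
lemma rowHooks_eq :
    (Finset.range (L.getD i 0)).image (fun j => hook L i j) =
      (Finset.Icc 1 (hook L i 0)).filter (fun d => hook L i 0 - d ∉ Hgt L i) := by
  apply Finset.eq_of_subset_of_card_le
  · intro d hd
    rw [Finset.mem_image] at hd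
    obtain ⟨j, hj, rfl⟩ := hd
    rw [Finset.mem_range] at hj
    rw [Finset.mem_filter, Finset.mem_Icc]
    have hle := hook_le hL hi hj
    refine ⟨⟨hle.1, hle.2⟩, ?_⟩
    intro hmem
    rw [Hgt, Finset.mem_image] at hmem
    obtain ⟨k, hk, hkeq⟩ := hmem
    rw [Finset.mem_Ico] at hk
    have := hook_add_hook_ne hL hi hj hk.1 hk.2
    omega
  · -- card computation
    have hcard1 : (Finset.range (L.getD i 0)).card =
        ((Finset.range (L.getD i 0)).image (fun j => hook L i j)).card := by
      rw [Finset.card_image_of_injOn]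
      intro a ha b hb hab
      rw [Finset.coe_range, Set.mem_Iio] at ha hb
      by_contra hne
      rcases lt_or_gt_of_ne hne with h' | h'
      · exact absurd hab (_root_.ne_of_gt (hook_row_strict_anti hL hi h' hb))
      · exact absurd hab (_root_.ne_of_lt (hook_row_strict_anti hL hi h' ha))
    have himage : (Finset.Icc 1 (hook L i 0)).filter (fun d => hook L i 0 - d ∈ Hgt L i)
        = (Hgt L i).image (fun e => hook L i 0 - e) := by
      ext d
      rw [Finset.mem_filter, Finset.mem_Icc, Finset.mem_image]
      constructor
      · rintro ⟨⟨h1, h2⟩, h3⟩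
        exact ⟨hook L i 0 - d, h3, by omega⟩
      · rintro ⟨e, he, rfl⟩
        have := Hgt_sub hL hi he
        refine ⟨⟨by omega, by omega⟩, ?_⟩
        have : hook L i 0 - (hook L i 0 - e) = e := by omega
        rw [this]; exact he
    have hcard2 : ((Finset.Icc 1 (hook L i 0)).filter
        (fun d => hook L i 0 - d ∈ Hgt L i)).card = L.length - 1 - i := by
      rw [himage, Finset.card_image_of_injOn, card_Hgt hL hi]
      intro a ha b hb hab
      rw [Finset.mem_coe] at ha hb
      simp only at hab
      have h1 := Hgt_sub hL hi ha
      have h2 := Hgt_sub hL hi hb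
      omega
    have hsplit := Finset.card_filter_add_card_filter_not
      (s := Finset.Icc 1 (hook L i 0)) (p := fun d => hook L i 0 - d ∈ Hgt L i)
    rw [Nat.card_Icc] at hsplit
    rw [← hcard1, Finset.card_range]
    have hh := hook_col0 hL hi
    omega

end rowHooks

/-- the "internal" flush condition -/
lemma isFlush_iff_T {n : ℕ} (hn : 0 < n) (H : Finset ℕ) (hpos : ∀ h ∈ H, 0 < h) :
    IsFlush n H ↔ ∀ h ∈ H, ∀ t, 1 ≤ t → n*t ≤ h → n*t < h ∧ h - n*t ∈ H := by
  constructor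
  · rintro ⟨h1, h2⟩ h hh t
    induction t with
    | zero => omega
    | succ t ih =>
      intro _ hle
      rcases Nat.eq_or_lt_of_le (show 1 ≤ t + 1 by omega) with he | ht1
      · -- t + 1 = 1
        have ht0 : t = 0 := by omega
        subst ht0
        rw [Nat.mul_one] at hle ⊢
        have hne : n ≠ h := by
          intro hc; exact h1 h hh ⟨1, by omega⟩
        have hlt : n < h := by omega
        exact ⟨hlt, h2 h hh hlt⟩
      · have ⟨ih1, ih2⟩ := ih (by omega) (by nlinarith)
        have hpos' := hpos _ ih2
        have hne : n ≠ h - n*t := by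
          intro hc; exact h1 _ ih2 ⟨1, by omega⟩
        have harith' : n*(t+1) = n*t + n := by ring
        have hlt : n < h - n*t := by omega
        have := h2 _ ih2 hlt
        have heq : h - n*t - n = h - n*(t+1) := by ring_nf; omega
        rw [heq] at this
        have harith : n*(t+1) = n*t + n := by ring
        exact ⟨by omega, this⟩
  · intro hT
    constructor
    · intro h hh hdvd
      obtain ⟨t, rfl⟩ := hdvd
      have h0 := hpos _ hh
      have ht : 1 ≤ t := by
        rcases Nat.eq_zero_or_pos t with rfl | h'
        · omega
        · exact h'
      have := (hT _ hh t ht (le_refl _)).1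
      omega
    · intro h hh hlt
      have := (hT h hh 1 (le_refl _) (by omega)).2
      simpa using this

theorem isCore_iff_flush {n : ℕ} (hn : 0 < n) {L : List ℕ} (hL : IsPartition L) :
    IsCore n L ↔ IsFlush n (firstColHooks L) := by
  rw [isFlush_iff_T hn _ (firstColHooks_pos hL)]
  constructor
  · intro hcore h hh t ht hle
    rw [mem_firstColHooks] at hh
    obtain ⟨i, hi, rfl⟩ := hh
    have hnotrow : n*t ∉ (Finset.range (L.getD i 0)).image (fun j => hook L i j) := by
      rw [Finset.mem_image]
      rintro ⟨j, hj, hjeq⟩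
      rw [Finset.mem_range] at hj
      exact hcore i hi j hj ⟨t, hjeq⟩
    rw [rowHooks_eq hL hi, Finset.mem_filter, Finset.mem_Icc] at hnotrow
    push_neg at hnotrow
    have hmem : hook L i 0 - n*t ∈ Hgt L i := hnotrow ⟨by nlinarith, hle⟩
    have hsub := Hgt_sub hL hi hmem
    refine ⟨by omega, ?_⟩
    rw [Hgt, Finset.mem_image] at hmem
    obtain ⟨k, hk, hkeq⟩ := hmem
    rw [Finset.mem_Ico] at hk
    rw [mem_firstColHooks]
    exact ⟨k, hk.2, hkeq⟩
  · intro hT i hi j hj hdvd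
    obtain ⟨t, hteq⟩ := hdvd
    have hle := hook_le hL hi hj
    have ht : 1 ≤ t := by
      rcases Nat.eq_zero_or_pos t with rfl | h'
      · omega
      · exact h'
    have hmem : n*t ∈ (Finset.range (L.getD i 0)).image (fun j => hook L i j) := by
      rw [Finset.mem_image]
      exact ⟨j, Finset.mem_range.mpr hj, hteq⟩
    rw [rowHooks_eq hL hi, Finset.mem_filter, Finset.mem_Icc] at hmem
    obtain ⟨⟨h1, h2⟩, h3⟩ := hmem
    have hh : hook L i 0 ∈ firstColHooks L := mem_firstColHooks.mpr ⟨i, hi, rfl⟩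
    obtain ⟨hlt, hmemH⟩ := hT _ hh t ht h2
    rw [mem_firstColHooks] at hmemH
    obtain ⟨k, hk, hkeq⟩ := hmemH
    apply h3
    rw [Hgt, Finset.mem_image]
    refine ⟨k, ?_, hkeq⟩
    rw [Finset.mem_Ico]
    refine ⟨?_, hk⟩
    by_contra hge
    push_neg at hge
    have hki : k ≤ i := by omega
    rcases eq_or_lt_of_le hki with rfl | hklt
    · omega
    · have := hook_col0_anti hL hklt hi
      omega

/-! ### Path basics -/

lemma count_bool (l : List Bool) : l.count true + l.count false = l.length := by
  induction l with
  | nil => simp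
  | cons a l ih =>
    cases a <;> simp [List.count_cons] <;> omega

section path
variable {m n : ℕ} {D : List Bool}

lemma nSteps_mono {i j : ℕ} (hij : i ≤ j) : nSteps D i ≤ nSteps D j := by
  unfold nSteps
  have : D.take i = (D.take j).take i := by rw [List.take_take, min_eq_left hij]
  rw [this]
  exact ((D.take j).take_prefix i).sublist.count_le true

lemma eSteps_mono {i j : ℕ} (hij : i ≤ j) : eSteps D i ≤ eSteps D j := by
  unfold eSteps
  have : D.take i = (D.take j).take i := by rw [List.take_take, min_eq_left hij]
  rw [this]
  exact ((D.take j).take_prefix i).sublist.count_le false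

lemma getD_bool {i : ℕ} (hi : i < D.length) : D.getD i true = D[i] :=
  List.getD_eq_getElem D true hi

lemma take_succ_getD {i : ℕ} (hi : i < D.length) :
    D.take (i+1) = D.take i ++ [D.getD i true] := by
  rw [getD_bool hi]
  rw [List.take_succ, List.getElem?_eq_getElem hi]
  rfl

lemma nSteps_succ_true {i : ℕ} (hi : i < D.length) (h : D.getD i true = true) :
    nSteps D (i+1) = nSteps D i + 1 := by
  unfold nSteps
  rw [take_succ_getD hi, List.count_append, h]
  simp

lemma nSteps_succ_false {i : ℕ} (hi : i < D.length) (h : D.getD i true = false) :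
    nSteps D (i+1) = nSteps D i := by
  unfold nSteps
  rw [take_succ_getD hi, List.count_append, h]
  simp

lemma nSteps_add_eSteps {i : ℕ} (hi : i ≤ D.length) :
    nSteps D i + eSteps D i = i := by
  unfold nSteps eSteps
  rw [count_bool, List.length_take]
  omega

lemma nSteps_le_count : nSteps D i ≤ D.count true :=
  (D.take_sublist i).count_le true

variable (hP : IsPath m n D)

include hP in
lemma nSteps_full : nSteps D (m + n) = n := by
  unfold nSteps
  rw [List.take_of_length_le (le_of_eq hP.1)]
  exact hP.2

lemma nSteps_succ_le {i : ℕ} : nSteps D (i+1) ≤ nSteps D i + 1 := by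
  rcases le_or_gt D.length i with h'' | h''
  · unfold nSteps
    rw [List.take_of_length_le h'', List.take_of_length_le (by omega)]
    omega
  · rcases Bool.eq_false_or_eq_true (D.getD i true) with ht | hf
    · rw [nSteps_succ_true h'' ht]
    · rw [nSteps_succ_false h'' hf]; omega

include hP in
lemma exists_nSteps {b : ℕ} (hb : b ≤ n) : ∃ i, i ≤ m + n ∧ nSteps D i = b := by
  have hfull := nSteps_full hP
  have hex : ∃ i, b ≤ nSteps D i := ⟨m + n, by omega⟩
  classical
  refine ⟨Nat.find hex, Nat.find_le (by omega), ?_⟩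
  have hfind : b ≤ nSteps D (Nat.find hex) := Nat.find_spec hex
  rcases Nat.eq_zero_or_pos (Nat.find hex) with h0 | h0
  · have hz : nSteps D 0 = 0 := by simp [nSteps]
    rw [h0] at hfind ⊢
    omega
  · have hfound : Nat.find hex = (Nat.find hex - 1) + 1 := by omega
    have hjlt : nSteps D (Nat.find hex - 1) < b := by
      by_contra hge
      push_neg at hge
      have := Nat.find_min hex (show Nat.find hex - 1 < Nat.find hex by omega)
      omega
    have hstep := nSteps_succ_le (D := D) (i := Nat.find hex - 1)
    rw [hfound] at hfind ⊢
    omega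

/-- the largest index `i ≤ m+n` with `nSteps D i = b`. -/
noncomputable def pimax (m n : ℕ) (D : List Bool) (b : ℕ) : ℕ :=
  ((Finset.range (m+n+1)).filter (fun i => nSteps D i = b)).max.getD 0

include hP in
lemma pimax_spec {b : ℕ} (hb : b ≤ n) :
    pimax m n D b ≤ m + n ∧ nSteps D (pimax m n D b) = b ∧
      ∀ j ≤ m + n, nSteps D j = b → j ≤ pimax m n D b := by
  obtain ⟨i, hi, hib⟩ := exists_nSteps hP hb
  have hne : ((Finset.range (m+n+1)).filter (fun i => nSteps D i = b)).Nonempty :=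
    ⟨i, by rw [Finset.mem_filter, Finset.mem_range]; exact ⟨by omega, hib⟩⟩
  obtain ⟨M, hM⟩ := Finset.max_of_nonempty hne
  have hMeq : pimax m n D b = M := by rw [pimax, hM]; rfl
  have hMmem := Finset.mem_of_max hM
  rw [Finset.mem_filter, Finset.mem_range] at hMmem
  refine ⟨by omega, by rw [hMeq]; exact hMmem.2, ?_⟩
  intro j hj hjb
  rw [hMeq]
  exact Finset.le_max_of_eq (by rw [Finset.mem_filter, Finset.mem_range]; exact ⟨by omega, hjb⟩) hM

include hP in
lemma length_D : D.length = m + n := hP.1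

include hP in
/-- characterization of north steps -/
lemma north_char {i : ℕ} (hi : i < m + n) :
    D.getD i true = true ↔ ∃ b, b < n ∧ i = pimax m n D b := by
  have hlen := length_D hP
  constructor
  · intro htrue
    have hb1 : nSteps D (i+1) = nSteps D i + 1 := nSteps_succ_true (by omega) htrue
    set b := nSteps D i with hbdef
    have hble : nSteps D (i+1) ≤ n := by
      have := nSteps_le_count (D := D) (i := i+1)
      rw [hP.2] at this
      exact this
    have hbn : b < n := by omega
    obtain ⟨h1, h2, h3⟩ := pimax_spec hP (le_of_lt hbn)
    refine ⟨b, hbn, ?_⟩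
    have hile : i ≤ pimax m n D b := h3 i (by omega) rfl
    -- imax ≤ i : anything greater has nSteps ≥ b+1
    have : ¬ (i < pimax m n D b) := by
      intro hlt
      have := nSteps_mono (D := D) (show i + 1 ≤ pimax m n D b by omega)
      omega
    omega
  · rintro ⟨b, hbn, rfl⟩
    obtain ⟨h1, h2, h3⟩ := pimax_spec hP (le_of_lt hbn)
    by_contra hfalse
    rw [Bool.not_eq_true] at hfalse
    have hstep : nSteps D (pimax m n D b + 1) = b := by
      rw [nSteps_succ_false (by omega) hfalse]; exact h2
    have := h3 (pimax m n D b + 1) (by omega) hstep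
    omega

include hP in
lemma pimax_lt {b : ℕ} (hb : b < n) : pimax m n D b < m + n := by
  obtain ⟨h1, h2, h3⟩ := pimax_spec hP (le_of_lt hb)
  rcases eq_or_lt_of_le h1 with he | h'
  · exfalso
    have := nSteps_full hP
    rw [he] at h2
    omega
  · exact h'

include hP in
lemma pimax_eq_add {b : ℕ} (hb : b ≤ n) :
    pimax m n D b = eSteps D (pimax m n D b) + b := by
  obtain ⟨h1, h2, h3⟩ := pimax_spec hP hb
  have hlen := length_D hP
  have := nSteps_add_eSteps (D := D) (i := pimax m n D b) (by omega)
  omega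

lemma southX_eq_card (D : List Bool) (y : ℕ) :
    southX D y = ((Finset.range D.length).filter
      (fun i => D.getD i true = false ∧ nSteps D i ≤ y)).card := by
  unfold southX
  rw [countP_eq_card_filter 0]
  rw [List.length_range]
  congr 1
  apply Finset.filter_congr
  intro k hk
  rw [Finset.mem_range] at hk
  rw [getD_eq_getElem' _ (by rwa [List.length_range]), List.getElem_range]
  simp [nSteps]

lemma eSteps_eq_card {i : ℕ} (hi : i ≤ D.length) :
    eSteps D i = ((Finset.range i).filter (fun k => D.getD k true = false)).card := by
  unfold eSteps
  rw [List.count_eq_countP, countP_eq_card_filter true]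
  rw [List.length_take, min_eq_left hi]
  congr 1
  apply Finset.filter_congr
  intro k hk
  rw [Finset.mem_range] at hk
  have : (D.take i).getD k true = D.getD k true := by
    rw [getD_eq' true _ (by rw [List.length_take]; omega),
        getD_eq' true _ (by omega), List.getElem_take]
  rw [this]
  simp [beq_iff_eq]

include hP in
lemma southX_eq_eSteps_pimax {b : ℕ} (hb : b ≤ n) :
    southX D b = eSteps D (pimax m n D b) := by
  obtain ⟨h1, h2, h3⟩ := pimax_spec hP hb
  have hlen := length_D hP
  rw [southX_eq_card, eSteps_eq_card (by omega)]
  congr 1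
  ext i
  simp only [Finset.mem_filter, Finset.mem_range]
  constructor
  · rintro ⟨hilen, hif, hib⟩
    refine ⟨?_, hif⟩
    rcases lt_or_ge (nSteps D i) b with hlt | hge
    · by_contra hge'
      push_neg at hge'
      have := nSteps_mono (D := D) hge'
      omega
    · have hieq : nSteps D i = b := by omega
      have : nSteps D (i+1) = b := by rw [nSteps_succ_false (by omega) hif]; exact hieq
      have := h3 (i+1) (by omega) this
      omega
  · rintro ⟨hii, hif⟩
    have := nSteps_mono (D := D) (le_of_lt hii)
    exact ⟨by omega, hif, by omega⟩

lemma southX_mono {y y' : ℕ} (h : y ≤ y') : southX D y ≤ southX D y' := by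
  rw [southX_eq_card, southX_eq_card]
  apply Finset.card_le_card
  intro i hi
  rw [Finset.mem_filter] at hi ⊢
  exact ⟨hi.1, hi.2.1, le_trans hi.2.2 h⟩

include hP in
lemma rank_eq {i : ℕ} : rank m n D i = (m : ℤ) * nSteps D i - (n : ℤ) * eSteps D i := rfl

include hP in
lemma eSteps_le_southX {i : ℕ} (hi : i ≤ m + n) {b : ℕ} (hb : nSteps D i = b) (hbn : b ≤ n) :
    eSteps D i ≤ southX D b := by
  obtain ⟨h1, h2, h3⟩ := pimax_spec hP hbn
  rw [southX_eq_eSteps_pimax hP hbn]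
  exact eSteps_mono (h3 i hi hb)

include hP in
lemma nSteps_le_n {i : ℕ} : nSteps D i ≤ n := by
  have := nSteps_le_count (D := D) (i := i)
  rw [hP.2] at this; exact this

include hP in
/-- Dyck iff the south-x values satisfy `n * x b ≤ m * b`. -/
lemma isDyck_iff_southX :
    IsDyck m n D ↔ ∀ b < n, n * southX D b ≤ m * b := by
  constructor
  · rintro ⟨-, hrank⟩ b hb
    obtain ⟨h1, h2, h3⟩ := pimax_spec hP (le_of_lt hb)
    have := hrank (pimax m n D b) h1
    rw [rank_eq hP, h2, ← southX_eq_eSteps_pimax hP (le_of_lt hb)] at this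
    have := sub_nonneg.mp this
    exact_mod_cast this
  · intro hx
    refine ⟨hP, ?_⟩
    intro i hi
    rw [rank_eq hP]
    set b := nSteps D i with hbdef
    have hbn : b ≤ n := nSteps_le_n hP
    have hle : eSteps D i ≤ southX D b := eSteps_le_southX hP hi rfl hbn
    rcases eq_or_lt_of_le hbn with he | hblt
    · have hem : eSteps D i ≤ m := by
        have h1 : eSteps D i ≤ D.count false := (D.take_sublist i).count_le false
        have h2 : D.count true + D.count false = D.length := count_bool D
        rw [hP.2, hP.1] at h2
        omega
      have : (n:ℤ) * eSteps D i ≤ (m:ℤ) * b := by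
        calc (n:ℤ) * eSteps D i ≤ (n:ℤ) * m :=
              mul_le_mul_of_nonneg_left (by exact_mod_cast hem) (by positivity)
        _ = (m:ℤ) * b := by rw [mul_comm, he]
      omega
    · have hxb := hx b hblt
      have : (n:ℤ) * eSteps D i ≤ (m:ℤ) * b := by
        calc (n:ℤ) * eSteps D i ≤ (n:ℤ) * southX D b := by
              apply mul_le_mul_of_nonneg_left _ (by positivity)
              exact_mod_cast hle
        _ ≤ (m:ℤ) * b := by exact_mod_cast hxb
      omega

end path

/-! ### Building a path from its south x-coordinates -/

def ofX (m n : ℕ) (x : ℕ → ℕ) : List Bool :=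
  List.ofFn (fun i : Fin (m+n) => decide (∃ b, b < n ∧ (i:ℕ) = x b + b))

section ofX
variable {m n : ℕ}

lemma length_ofX (x : ℕ → ℕ) : (ofX m n x).length = m + n := by
  simp [ofX]

lemma getD_ofX (x : ℕ → ℕ) {i : ℕ} (hi : i < m + n) :
    (ofX m n x).getD i true = decide (∃ b, b < n ∧ i = x b + b) := by
  rw [getD_eq' true _ (by rw [length_ofX]; exact hi)]
  simp [ofX]

lemma nSteps_eq_card {D : List Bool} {i : ℕ} (hi : i ≤ D.length) :
    nSteps D i = ((Finset.range i).filter (fun k => D.getD k true = true)).card := by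
  unfold nSteps
  rw [List.count_eq_countP, countP_eq_card_filter true]
  rw [List.length_take, min_eq_left hi]
  congr 1
  apply Finset.filter_congr
  intro k hk
  rw [Finset.mem_range] at hk
  have : (D.take i).getD k true = D.getD k true := by
    rw [getD_eq' true _ (by rw [List.length_take]; omega),
        getD_eq' true _ (by omega), List.getElem_take]
  rw [this]
  simp [beq_iff_eq]

theorem ofX_southX {D : List Bool} (hP : IsPath m n D) :
    ofX m n (fun b => southX D b) = D := by
  apply List.ext_getElem
  · rw [length_ofX, hP.1]
  · intro i hi hi'
    rw [hP.1] at hi'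
    have hiff : (∃ b, b < n ∧ i = southX D b + b) ↔ D.getD i true = true := by
      rw [north_char hP hi']
      constructor
      · rintro ⟨b, hb, hbi⟩
        refine ⟨b, hb, ?_⟩
        rw [pimax_eq_add hP (le_of_lt hb), ← southX_eq_eSteps_pimax hP (le_of_lt hb)]
        exact hbi
      · rintro ⟨b, hb, hbi⟩
        refine ⟨b, hb, ?_⟩
        rw [southX_eq_eSteps_pimax hP (le_of_lt hb), ← pimax_eq_add hP (le_of_lt hb)]
        exact hbi
    rw [getD_bool (by omega : i < D.length)] at hiff
    have : (ofX m n (fun b => southX D b))[i] =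
        decide (∃ b, b < n ∧ i = southX D b + b) := by
      simp [ofX]
    rw [this]
    rcases Bool.eq_false_or_eq_true D[i] with ht | hf
    · rw [ht]
      exact decide_eq_true (hiff.mpr ht)
    · rw [hf]
      apply decide_eq_false
      intro hp
      rw [hiff.mp hp] at hf
      exact absurd hf (by simp)

variable {x : ℕ → ℕ} (hmono : ∀ a b, a ≤ b → b < n → x a ≤ x b)
  (hdy : ∀ b < n, n * x b ≤ m * b) (hm : 0 < m) (hn : 0 < n)

include hdy hm hn in
lemma xlt {b : ℕ} (hb : b < n) : x b < m := by
  have h1 := hdy b hb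
  have h2 : m * b ≤ m * (n-1) := Nat.mul_le_mul_left m (by omega)
  have h4 : m * (n-1) + m = m * n := by
    have hc : (n-1) + 1 = n := by omega
    calc m * (n-1) + m = m * ((n-1)+1) := by ring
    _ = m * n := by rw [hc]
  have h5 : n * x b < n * m := by
    have hc : n * m = m * n := by ring
    omega
  exact lt_of_mul_lt_mul_left h5 (by omega)

include hmono in
lemma xadd_strictMono {a b : ℕ} (hab : a < b) (hb : b < n) : x a + a < x b + b := by
  have := hmono a b (le_of_lt hab) hb
  omega

include hmono in
lemma xadd_lt_iff {a b : ℕ} (ha : a < n) (hb : b < n) :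
    x a + a < x b + b ↔ a < b := by
  constructor
  · intro h
    by_contra hge
    push_neg at hge
    have := hmono b a hge ha
    omega
  · intro h
    exact xadd_strictMono hmono h hb

include hmono hdy hm hn in
lemma nSteps_ofX {i : ℕ} (hi : i ≤ m + n) :
    nSteps (ofX m n x) i = ((Finset.range n).filter (fun b => x b + b < i)).card := by
  rw [nSteps_eq_card (by rw [length_ofX]; exact hi)]
  have himg : (Finset.range i).filter (fun k => (ofX m n x).getD k true = true) =
      ((Finset.range n).filter (fun b => x b + b < i)).image (fun b => x b + b) := by
    ext k
    simp only [Finset.mem_filter, Finset.mem_range, Finset.mem_image]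
    constructor
    · rintro ⟨hk, hkt⟩
      rw [getD_ofX x (by omega)] at hkt
      rw [decide_eq_true_eq] at hkt
      obtain ⟨b, hb, rfl⟩ := hkt
      exact ⟨b, ⟨hb, hk⟩, rfl⟩
    · rintro ⟨b, ⟨hb, hbi⟩, rfl⟩
      refine ⟨hbi, ?_⟩
      rw [getD_ofX x (by omega), decide_eq_true_eq]
      exact ⟨b, hb, rfl⟩
  rw [himg, Finset.card_image_of_injOn]
  intro a ha b hb hab
  rw [Finset.coe_filter, Set.mem_setOf_eq, Finset.mem_range] at ha hb
  simp only at hab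
  by_contra hne
  rcases lt_or_gt_of_ne hne with h' | h'
  · exact absurd hab (_root_.ne_of_lt (xadd_strictMono hmono h' hb.1))
  · exact absurd hab (_root_.ne_of_gt (xadd_strictMono hmono h' ha.1))

include hmono hdy hm hn in
lemma isPath_ofX : IsPath m n (ofX m n x) := by
  refine ⟨length_ofX x, ?_⟩
  have : (ofX m n x).count true = nSteps (ofX m n x) (m+n) := by
    unfold nSteps
    rw [List.take_of_length_le (le_of_eq (length_ofX x))]
  rw [this, nSteps_ofX hmono hdy hm hn (le_refl _)]
  have : (Finset.range n).filter (fun b => x b + b < m + n) = Finset.range n := by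
    apply Finset.filter_true_of_mem
    intro b hb
    rw [Finset.mem_range] at hb
    have := xlt hdy hm hn hb
    omega
  rw [this, Finset.card_range]

include hmono hdy hm hn in
lemma nSteps_ofX_le_iff {i b : ℕ} (hi : i ≤ m + n) (hb : b < n) :
    nSteps (ofX m n x) i ≤ b ↔ i ≤ x b + b := by
  rw [nSteps_ofX hmono hdy hm hn hi]
  constructor
  · intro hcard
    by_contra hgt
    push_neg at hgt
    have hsub : Finset.range (b+1) ⊆ (Finset.range n).filter (fun c => x c + c < i) := by
      intro c hc
      rw [Finset.mem_range] at hc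
      rw [Finset.mem_filter, Finset.mem_range]
      have h1 : x c + c ≤ x b + b := by
        have := hmono c b (by omega) hb
        omega
      exact ⟨by omega, by omega⟩
    have := Finset.card_le_card hsub
    rw [Finset.card_range] at this
    omega
  · intro hle
    have hsub : (Finset.range n).filter (fun c => x c + c < i) ⊆ Finset.range b := by
      intro c hc
      rw [Finset.mem_filter, Finset.mem_range] at hc
      rw [Finset.mem_range]
      by_contra hge
      push_neg at hge
      have : x b + b ≤ x c + c := by
        have := hmono b c hge hc.1
        omega
      omega
    have := Finset.card_le_card hsub
    rw [Finset.card_range] at this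
    omega

include hmono hdy hm hn in
lemma southX_ofX {b : ℕ} (hb : b < n) : southX (ofX m n x) b = x b := by
  rw [southX_eq_card, length_ofX]
  have hxb : x b + b < m + n := by
    have := xlt hdy hm hn hb
    omega
  have hset : (Finset.range (m+n)).filter
      (fun i => (ofX m n x).getD i true = false ∧ nSteps (ofX m n x) i ≤ b) =
      (Finset.range (x b + b + 1)).filter
        (fun i => ¬ ∃ c, c < n ∧ i = x c + c) := by
    ext i
    simp only [Finset.mem_filter, Finset.mem_range]
    constructor
    · rintro ⟨hi, hif, hib⟩
      rw [nSteps_ofX_le_iff hmono hdy hm hn (by omega) hb] at hib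
      refine ⟨by omega, ?_⟩
      rw [getD_ofX x (by omega), decide_eq_false_iff_not] at hif
      exact hif
    · rintro ⟨hi, hnex⟩
      have hif : (ofX m n x).getD i true = false := by
        rw [getD_ofX x (by omega)]
        exact decide_eq_false hnex
      refine ⟨by omega, hif, ?_⟩
      rw [nSteps_ofX_le_iff hmono hdy hm hn (by omega) hb]
      omega
  rw [hset]
  -- complement within range (x b + b + 1)
  have hcompl : (Finset.range (x b + b + 1)).filter (fun i => ∃ c, c < n ∧ i = x c + c) =
      (Finset.range (b+1)).image (fun c => x c + c) := by
    ext i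
    simp only [Finset.mem_filter, Finset.mem_range, Finset.mem_image]
    constructor
    · rintro ⟨hi, c, hc, rfl⟩
      refine ⟨c, ?_, rfl⟩
      by_contra hge
      push_neg at hge
      have : x b + b < x c + c := xadd_strictMono hmono (by omega) hc
      omega
    · rintro ⟨c, hc, rfl⟩
      have h1 : x c + c ≤ x b + b := by
        have := hmono c b (by omega) hb
        omega
      exact ⟨by omega, c, by omega, rfl⟩
  have hcard2 : ((Finset.range (x b + b + 1)).filter
      (fun i => ∃ c, c < n ∧ i = x c + c)).card = b + 1 := by
    rw [hcompl, Finset.card_image_of_injOn, Finset.card_range]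
    intro a ha c hc hac
    rw [Finset.coe_range, Set.mem_Iio] at ha hc
    simp only at hac
    by_contra hne
    rcases lt_or_gt_of_ne hne with h' | h'
    · exact absurd hac (_root_.ne_of_lt (xadd_strictMono hmono h' (by omega)))
    · exact absurd hac (_root_.ne_of_gt (xadd_strictMono hmono h' (by omega)))
  have hsplit := Finset.card_filter_add_card_filter_not
    (s := Finset.range (x b + b + 1)) (p := fun i => ∃ c, c < n ∧ i = x c + c)
  rw [Finset.card_range] at hsplit
  omega

include hmono hdy hm hn in
lemma isDyck_ofX : IsDyck m n (ofX m n x) := by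
  rw [isDyck_iff_southX (isPath_ofX hmono hdy hm hn)]
  intro b hb
  rw [southX_ofX hmono hdy hm hn hb]
  exact hdy b hb

end ofX

/-! ### The Anderson set as a Finset -/

def AFin (m n : ℕ) (x : ℕ → ℕ) : Finset ℕ :=
  (Finset.range n).biUnion
    (fun b => ((Finset.Ioc (x b) m).filter (fun a => n*a < m*b)).image (fun a => m*b - n*a))

section AFin
variable {m n : ℕ}

lemma mem_AFin {x : ℕ → ℕ} {h : ℕ} :
    h ∈ AFin m n x ↔ ∃ b, b < n ∧ ∃ a, x b < a ∧ a ≤ m ∧ n*a < m*b ∧ h = m*b - n*a := by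
  simp only [AFin, Finset.mem_biUnion, Finset.mem_image, Finset.mem_filter,
    Finset.mem_Ioc, Finset.mem_range]
  constructor
  · rintro ⟨b, hb, a, ⟨⟨h1, h2⟩, h3⟩, rfl⟩
    exact ⟨b, hb, a, h1, h2, h3, rfl⟩
  · rintro ⟨b, hb, a, h1, h2, h3, rfl⟩
    exact ⟨b, hb, a, ⟨⟨h1, h2⟩, h3⟩, rfl⟩

lemma AFin_congr {x x' : ℕ → ℕ} (h : ∀ b < n, x b = x' b) : AFin m n x = AFin m n x' := by
  unfold AFin
  apply Finset.biUnion_congr rfl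
  intro b hb
  rw [Finset.mem_range] at hb
  rw [h b hb]

lemma AFin_pos {x : ℕ → ℕ} {h : ℕ} (hh : h ∈ AFin m n x) : 0 < h := by
  rw [mem_AFin] at hh
  obtain ⟨b, hb, a, h1, h2, h3, rfl⟩ := hh
  omega

lemma mem_AFin_b_pos {b a : ℕ} (h3 : n*a < m*b) : 0 < b := by
  by_contra h0
  push_neg at h0
  interval_cases b
  omega

/-- south-x of an `(a,b)` with everything in range: `a+1 ≤ m`. -/
lemma a_lt_m (hm : 0 < m) {a b : ℕ} (hb : b < n) (h3 : n*(a+1) ≤ m*b) : a + 1 < m + 1 := by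
  have h2 : m * b ≤ m * (n-1) := Nat.mul_le_mul_left m (by omega)
  have h4 : m * (n-1) + m = m * n := by
    have hc : (n-1) + 1 = n := by omega
    calc m * (n-1) + m = m * ((n-1)+1) := by ring
    _ = m * n := by rw [hc]
  have h5 : n * (a+1) < n * m := by
    have hc : n * m = m * n := by ring
    omega
  have := lt_of_mul_lt_mul_left h5 (Nat.zero_le n)
  omega

/-- `StrictlyRightOf` in terms of `southX`. -/
lemma SRO_iff {D : List Bool} (hP : IsPath m n D) {a b : ℕ} :
    StrictlyRightOf m n D a b ↔ a ≤ m ∧ b ≤ n ∧ southX D b < a := by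
  unfold StrictlyRightOf
  constructor
  · rintro ⟨h1, h2, h3⟩
    refine ⟨h1, h2, ?_⟩
    obtain ⟨g1, g2, g3⟩ := pimax_spec hP h2
    have := h3 (pimax m n D b) g1 g2
    rw [southX_eq_eSteps_pimax hP h2]
    exact this
  · rintro ⟨h1, h2, h3⟩
    refine ⟨h1, h2, ?_⟩
    intro i hi hib
    have : eSteps D i ≤ southX D b := eSteps_le_southX hP hi hib h2
    have he : eSteps D i = (D.take i).count false := rfl
    omega

lemma southX_top {D : List Bool} (hP : IsPath m n D) : southX D n = m := by
  rw [southX_eq_card]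
  have : (Finset.range D.length).filter
      (fun i => D.getD i true = false ∧ nSteps D i ≤ n) =
      (Finset.range D.length).filter (fun i => D.getD i true = false) := by
    apply Finset.filter_congr
    intro i _
    have := nSteps_le_n (D := D) hP (i := i)
    simp only [this, and_true]
  rw [this]
  have hc : D.count false = ((Finset.range D.length).filter
      (fun i => D.getD i true = false)).card := by
    have := eSteps_eq_card (D := D) (i := D.length) (le_refl _)
    unfold eSteps at this
    rw [List.take_of_length_le (le_refl _)] at this
    exact this
  rw [← hc]
  have h2 := count_bool D
  rw [hP.1] at h2
  rw [hP.2] at h2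
  omega

/-- The Anderson set of a path agrees with `AFin` of its south-x function. -/
theorem coe_AFin_eq_andersonSet {D : List Bool} (hP : IsPath m n D) (hm : 0 < m) :
    (↑(AFin m n (fun b => southX D b)) : Set ℕ) = andersonSet m n D := by
  ext h
  rw [Finset.mem_coe, mem_AFin]
  unfold andersonSet
  rw [Set.mem_setOf_eq]
  constructor
  · rintro ⟨b, hb, a, h1, h2, h3, rfl⟩
    refine ⟨by omega, a, b, ?_, ?_⟩
    · rw [SRO_iff hP]
      exact ⟨h2, by omega, h1⟩
    · push_cast
      omega
  · rintro ⟨hpos, a, b, hsro, hcast⟩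
    rw [SRO_iff hP] at hsro
    obtain ⟨h1, h2, h3⟩ := hsro
    have hna : n*a < m*b := by
      have : (0:ℤ) < (m:ℤ)*b - n*a := by omega
      have : (n:ℤ)*a < (m:ℤ)*b := by omega
      exact_mod_cast this
    have hbn : b < n := by
      rcases eq_or_lt_of_le h2 with rfl | h'
      · exfalso
        rw [southX_top hP] at h3
        omega
      · exact h'
    refine ⟨b, hbn, a, h3, h1, hna, ?_⟩
    have : (h:ℤ) = (m*b - n*a : ℕ) := by push_cast; omega
    exact_mod_cast this

variable (hco : Nat.Coprime m n) (hm : 0 < m) (hn : 0 < n)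

include hco hn in
lemma not_n_dvd_mb {b : ℕ} (hb0 : 0 < b) (hb : b < n) : ¬ (n ∣ m * b) := by
  intro hdvd
  have : n ∣ b := (Nat.Coprime.coprime_dvd_left (dvd_refl n) hco.symm).dvd_of_dvd_mul_left hdvd
  have := Nat.le_of_dvd hb0 this
  omega

include hco hm hn in
lemma AFin_flush_n {x : ℕ → ℕ} : IsFlush n (AFin m n x) := by
  constructor
  · intro h hh hdvd
    rw [mem_AFin] at hh
    obtain ⟨b, hb, a, h1, h2, h3, rfl⟩ := hh
    have hb0 : 0 < b := mem_AFin_b_pos h3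
    apply not_n_dvd_mb hco hn hb0 hb
    have : m*b = (m*b - n*a) + n*a := by omega
    rw [this]
    exact Nat.dvd_add hdvd (Dvd.intro a rfl)
  · intro h hh hlt
    rw [mem_AFin] at hh ⊢
    obtain ⟨b, hb, a, h1, h2, h3, rfl⟩ := hh
    refine ⟨b, hb, a+1, by omega, ?_, ?_, ?_⟩
    · have hna1 : n*(a+1) ≤ m*b := by
        have : n*(a+1) = n*a + n := by ring
        omega
      have := a_lt_m hm hb hna1
      omega
    · have : n*(a+1) = n*a + n := by ring
      omega
    · have : n*(a+1) = n*a + n := by ring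
      omega

include hco hm hn in
lemma AFin_flush_m {x : ℕ → ℕ} (hmono : ∀ a b, a ≤ b → b < n → x a ≤ x b) :
    IsFlush m (AFin m n x) := by
  constructor
  · intro h hh hdvd
    rw [mem_AFin] at hh
    obtain ⟨b, hb, a, h1, h2, h3, rfl⟩ := hh
    have hdvd2 : m ∣ n*a := by
      have h4 : m ∣ m*b := Dvd.intro b rfl
      have h5 : n*a = m*b - (m*b - n*a) := by omega
      rw [h5]
      exact Nat.dvd_sub h4 hdvd
    have hma : m ∣ a := (Nat.Coprime.coprime_dvd_left (dvd_refl m) hco).dvd_of_dvd_mul_left hdvd2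
    have ha : a = m := by
      have := Nat.le_of_dvd (by omega) hma
      omega
    have hna : n * a = n * m := by rw [ha]
    have hcon : m * b ≤ n * m := by
      calc m * b ≤ m * (n-1) := Nat.mul_le_mul_left m (by omega)
      _ ≤ m * n := Nat.mul_le_mul_left m (by omega)
      _ = n * m := by ring
    omega
  · intro h hh hlt
    rw [mem_AFin] at hh ⊢
    obtain ⟨b, hb, a, h1, h2, h3, rfl⟩ := hh
    have hb0 : 0 < b := mem_AFin_b_pos h3
    have hmb : m*(b-1) + m = m*b := by
      have hc : (b-1) + 1 = b := by omega
      calc m*(b-1) + m = m*((b-1)+1) := by ring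
      _ = m*b := by rw [hc]
    refine ⟨b-1, by omega, a, ?_, h2, by omega, by omega⟩
    calc x (b-1) ≤ x b := hmono (b-1) b (by omega) hb
    _ < a := h1

include hco in
lemma b_unique {b b' a a' : ℕ} (hb : b < n) (hb' : b' < n)
    (heq : m*b + n*a' = m*b' + n*a) : b = b' := by
  have hmod : m*b ≡ m*b' [MOD n] := by
    have h1 : m*b + n*a' ≡ m*b' + n*a [MOD n] := by rw [heq]
    have h2 : m*b + n*a' ≡ m*b [MOD n] := by
      have : n*a' ≡ 0 [MOD n] := (Nat.modEq_zero_iff_dvd).mpr (Dvd.intro a' rfl)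
      calc m*b + n*a' ≡ m*b + 0 [MOD n] := Nat.ModEq.add_left _ this
      _ = m*b := by omega
    have h3 : m*b' + n*a ≡ m*b' [MOD n] := by
      have : n*a ≡ 0 [MOD n] := (Nat.modEq_zero_iff_dvd).mpr (Dvd.intro a rfl)
      calc m*b' + n*a ≡ m*b' + 0 [MOD n] := Nat.ModEq.add_left _ this
      _ = m*b' := by omega
    exact h2.symm.trans (h1.trans h3)
  have hbb : b ≡ b' [MOD n] := hmod.cancel_left_of_coprime (by rw [Nat.coprime_comm] at hco; exact hco)
  unfold Nat.ModEq at hbb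
  rw [Nat.mod_eq_of_lt hb, Nat.mod_eq_of_lt hb'] at hbb
  exact hbb

include hco hm hn in
lemma AFin_le {x x' : ℕ → ℕ}
    (hdy : ∀ b < n, n * x b ≤ m * b) (hdy' : ∀ b < n, n * x' b ≤ m * b)
    (hsub : AFin m n x ⊆ AFin m n x') {b : ℕ} (hb : b < n) : x' b ≤ x b := by
  rcases Nat.eq_zero_or_pos b with rfl | hb0
  · have h1 := hdy' 0 hb
    have h2 : n * x' 0 = 0 := by omega
    rcases Nat.mul_eq_zero.mp h2 with h | h
    · omega
    · omega
  rcases lt_or_ge (n*(x b + 1)) (m*b) with hcase | hcase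
  · -- class nonempty on the x side
    have hmem : m*b - n*(x b + 1) ∈ AFin m n x := by
      rw [mem_AFin]
      refine ⟨b, hb, x b + 1, by omega, ?_, hcase, rfl⟩
      have := a_lt_m hm hb (le_of_lt hcase)
      omega
    have hmem' := hsub hmem
    rw [mem_AFin] at hmem'
    obtain ⟨b', hb', a', h1, h2, h3, heq⟩ := hmem'
    have hbb : b = b' := by
      apply b_unique hco hb hb' (a := x b + 1) (a' := a')
      omega
    subst hbb
    have : n*a' = n*(x b + 1) := by omega
    have : a' = x b + 1 := by
      have hn0 : 0 < n := hn
      exact Nat.eq_of_mul_eq_mul_left hn0 this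
    omega
  · -- x b is at the floor; x' b cannot exceed it
    have h1 := hdy' b hb
    have hne : ¬ (n ∣ m*b) := not_n_dvd_mb hco hn hb0 hb
    have hlt : m*b < n*(x b+1) := by
      rcases eq_or_lt_of_le hcase with he | h'
      · exact absurd ⟨x b + 1, by omega⟩ hne
      · exact h'
    have : n * x' b < n * (x b + 1) := by omega
    have := lt_of_mul_lt_mul_left this (Nat.zero_le n)
    omega

include hco hm hn in
lemma AFin_inj {x x' : ℕ → ℕ}
    (hdy : ∀ b < n, n * x b ≤ m * b) (hdy' : ∀ b < n, n * x' b ≤ m * b)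
    (heq : AFin m n x = AFin m n x') {b : ℕ} (hb : b < n) : x b = x' b := by
  have h1 := AFin_le hco hm hn hdy hdy' (le_of_eq heq) hb
  have h2 := AFin_le hco hm hn hdy' hdy (le_of_eq heq.symm) hb
  omega

end AFin

/-! ### Down-closed finsets of naturals -/

lemma downclosed_descend (S : Finset ℕ) (hd : ∀ t, t+1 ∈ S → t ∈ S) :
    ∀ s, s ∈ S → ∀ t, t ≤ s → t ∈ S := by
  intro s
  induction s with
  | zero => intro hs t ht; rw [Nat.le_zero.mp ht]; exact hs
  | succ s ih =>
    intro hs t ht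
    rcases eq_or_lt_of_le ht with rfl | h'
    · exact hs
    · exact ih (hd s hs) t (by omega)

lemma downclosed_mem_iff (S : Finset ℕ) (hd : ∀ t, t+1 ∈ S → t ∈ S) (t : ℕ) :
    t ∈ S ↔ t < S.card := by
  constructor
  · intro ht
    have hsub : Finset.range (t+1) ⊆ S := by
      intro i hi
      rw [Finset.mem_range] at hi
      exact downclosed_descend S hd t ht i (by omega)
    have := Finset.card_le_card hsub
    rw [Finset.card_range] at this
    omega
  · intro hlt
    by_contra hns
    have hsub : S ⊆ Finset.range t := by
      intro s hs
      rw [Finset.mem_range]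
      by_contra hge
      push_neg at hge
      exact hns (downclosed_descend S hd s hs t hge)
    have := Finset.card_le_card hsub
    rw [Finset.card_range] at this
    omega

/-! ### Residues -/

lemma exists_res {m n : ℕ} (hco : Nat.Coprime m n) (hn : 0 < n) (h : ℕ) :
    ∃ b, b < n ∧ h % n = (m*b) % n := by
  haveI : NeZero n := ⟨by omega⟩
  set u := ZMod.unitOfCoprime m hco with hu
  refine ⟨((u⁻¹ : (ZMod n)ˣ) * (h : ZMod n) : ZMod n).val, ZMod.val_lt _, ?_⟩
  have hcast : ((m * ZMod.val ((u⁻¹ : (ZMod n)ˣ) * (h : ZMod n) : ZMod n) : ℕ) : ZMod n)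
      = (h : ZMod n) := by
    push_cast
    rw [ZMod.natCast_val, ZMod.cast_id]
    have hm : (m : ZMod n) = (u : ZMod n) := (ZMod.coe_unitOfCoprime m hco).symm
    rw [hm, ← mul_assoc]
    norm_cast
    rw [mul_inv_cancel]
    simp
  have := (ZMod.natCast_eq_natCast_iff _ _ _).mp hcast.symm
  exact this

/-! ### From a doubly flush set to south x-coordinates -/

def clsC (m n : ℕ) (H : Finset ℕ) (b : ℕ) : Finset ℕ :=
  H.filter (fun h => h % n = (m*b) % n)

def xOfH (m n : ℕ) (H : Finset ℕ) : ℕ → ℕ :=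
  fun b => m*b/n - (clsC m n H b).card

section xOfH
variable {m n : ℕ} {H : Finset ℕ}
  (hco : Nat.Coprime m n) (hm : 0 < m) (hn : 0 < n)
  (hfm : IsFlush m H) (hfn : IsFlush n H)

include hfn hn in
lemma H_pos : ∀ h ∈ H, 0 < h := by
  intro h hh
  rcases Nat.eq_zero_or_pos h with rfl | h'
  · exact absurd (dvd_zero n) (hfn.1 0 hh)
  · exact h'

include hco hm hn hfm hfn in
lemma H_lt_mb : ∀ b, b < n → ∀ h ∈ H, h % n = (m*b) % n → h < m*b := by
  intro b
  induction b with
  | zero =>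
    intro _ h hh hmod
    exfalso
    apply hfn.1 h hh
    simpa [Nat.dvd_iff_mod_eq_zero] using hmod
  | succ b ih =>
    intro hb h hh hmod
    rcases lt_trichotomy h m with h' | h' | h'
    · have : m ≤ m * (b+1) := Nat.le_mul_of_pos_right m (by omega)
      omega
    · exact absurd (by rw [h'] : (m:ℕ) ∣ h) (hfm.1 h hh)
    · have hmem : h - m ∈ H := hfm.2 h hh h'
      have hmod2 : (h - m) % n = (m*b) % n := by
        have e1 : (h - m) + m = h := by omega
        have e2 : m*(b+1) = m*b + m := by ring
        have : (h - m) + m ≡ m*b + m [MOD n] := by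
          rw [e1, ← e2]
          exact hmod
        exact Nat.ModEq.add_right_cancel' m this
      have := ih (by omega) (h - m) hmem hmod2
      have e2 : m*(b+1) = m*b + m := by ring
      omega

include hn in
lemma cls_pred {b : ℕ} (hfn' : IsFlush n H) {r : ℕ} (hr : r = (m*b) % n) (hr0 : 0 < r) :
    ∀ t, r + (t+1)*n ∈ clsC m n H b → r + t*n ∈ clsC m n H b := by
  intro t hmem
  rw [clsC, Finset.mem_filter] at hmem ⊢
  obtain ⟨hH, hmod⟩ := hmem
  have hgt : n < r + (t+1)*n := by
    have : n ≤ (t+1)*n := Nat.le_mul_of_pos_left n (by omega)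
    omega
  have hsub : r + (t+1)*n - n = r + t*n := by
    have : (t+1)*n = t*n + n := by ring
    omega
  have hmem2 : r + t*n ∈ H := by
    rw [← hsub]
    exact hfn'.2 _ hH hgt
  refine ⟨hmem2, ?_⟩
  have hrn : r < n := by rw [hr]; exact Nat.mod_lt _ (by omega)
  have : (r + t*n) % n = r % n := by
    simp [Nat.add_mul_mod_self_right]
  rw [this, Nat.mod_eq_of_lt hrn, hr]

include hco hm hn hfm hfn in
lemma mem_cls_iff {b : ℕ} (hb0 : 0 < b) (hb : b < n) {h : ℕ} (hh0 : 0 < h)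
    (hmod : h % n = (m*b) % n) :
    (h ∈ H ↔ h < n * (clsC m n H b).card + (m*b) % n) := by
  set r := (m*b) % n with hr
  have hr0 : 0 < r := by
    rcases Nat.eq_zero_or_pos r with h0 | h0
    · exfalso
      exact not_n_dvd_mb hco hn hb0 hb (by rwa [Nat.dvd_iff_mod_eq_zero, ← hr])
    · exact h0
  have hrn : r < n := by rw [hr]; exact Nat.mod_lt _ (by omega)
  -- the index set T
  set T := (Finset.range (m*b)).filter (fun t => r + t*n ∈ clsC m n H b) with hT
  have hTd : ∀ t, t+1 ∈ T → t ∈ T := by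
    intro t ht
    rw [hT, Finset.mem_filter, Finset.mem_range] at ht ⊢
    exact ⟨by omega, cls_pred hn hfn hr.symm hr0 t ht.2⟩
  have hclsT : clsC m n H b = T.image (fun t => r + t*n) := by
    ext g
    rw [Finset.mem_image]
    constructor
    · intro hg
      have hgmod : g % n = r := by
        rw [clsC, Finset.mem_filter] at hg
        exact hg.2
      have hgH : g ∈ H := by
        rw [clsC, Finset.mem_filter] at hg
        exact hg.1
      have hglt : g < m*b := H_lt_mb hco hm hn hfm hfn b hb g hgH (by rwa [← hr])
      refine ⟨g / n, ?_, ?_⟩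
      · rw [hT, Finset.mem_filter, Finset.mem_range]
        have hdm := Nat.div_add_mod g n
        have hcm : (g/n)*n = n*(g/n) := by ring
        have : r + (g/n)*n = g := by
          rw [← hgmod]
          omega
        rw [this]
        constructor
        · have : g / n ≤ g := Nat.div_le_self g n
          omega
        · exact hg
      · have hdm := Nat.div_add_mod g n
        have hcm : (g/n)*n = n*(g/n) := by ring
        show r + (g/n)*n = g
        rw [← hgmod]
        omega
    · rintro ⟨t, ht, rfl⟩
      rw [hT, Finset.mem_filter] at ht
      exact ht.2
  have hinj : Set.InjOn (fun t => r + t*n) ↑T := by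
    intro a _ c _ hac
    simp only at hac
    have : a * n = c * n := by omega
    exact Nat.eq_of_mul_eq_mul_right (by omega) this
  have hcard : T.card = (clsC m n H b).card := by
    rw [hclsT, Finset.card_image_of_injOn hinj]
  have hmemT := downclosed_mem_iff T hTd
  -- now the characterization
  have hdm := Nat.div_add_mod h n
  have hcm : (h/n)*n = n*(h/n) := by ring
  have hrep : h = r + (h/n)*n := by rw [← hmod]; omega
  constructor
  · intro hH
    have : h ∈ clsC m n H b := by
      rw [clsC, Finset.mem_filter]
      exact ⟨hH, by rw [hmod, hr]⟩
    rw [hclsT, Finset.mem_image] at this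
    obtain ⟨t, htT, hteq⟩ := this
    have htc : t < T.card := (hmemT t).mp htT
    have : h ≤ r + (T.card - 1)*n := by
      have h1 : t ≤ T.card - 1 := by omega
      have h2 : t*n ≤ (T.card-1)*n := Nat.mul_le_mul_right n h1
      omega
    have h3 : (T.card - 1)*n + n = T.card * n := by
      have hc : T.card - 1 + 1 = T.card := by omega
      calc (T.card-1)*n + n = ((T.card-1)+1)*n := by ring
      _ = T.card * n := by rw [hc]
    have : n * T.card = T.card * n := by ring
    have hk2 : n*T.card = n*(clsC m n H b).card := by rw [hcard]
    omega
  · intro hlt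
    have htT : h / n ∈ T := by
      rw [hmemT]
      -- h = r + (h/n) n < n * T.card + r
      have hk2 : n*T.card = n*(clsC m n H b).card := by rw [hcard]
      have h1 : (h/n) * n < n * T.card := by omega
      have h2 : (h/n) * n = n * (h/n) := by ring
      have h3 : n * (h/n) < n * T.card := by omega
      have := lt_of_mul_lt_mul_left h3 (Nat.zero_le n)
      omega
    rw [hT, Finset.mem_filter] at htT
    have : r + (h/n)*n ∈ clsC m n H b := htT.2
    rw [← hrep] at this
    rw [clsC, Finset.mem_filter] at this
    exact this.1

include hco hm hn hfm hfn in
lemma cls_card_le {b : ℕ} (hb : b < n) : (clsC m n H b).card ≤ m*b/n := by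
  rcases Nat.eq_zero_or_pos (clsC m n H b).card with h0 | h0
  · rw [h0]; exact Nat.zero_le _
  obtain ⟨g, hg⟩ := Finset.card_pos.mp h0
  have hgH : g ∈ H := by
    rw [clsC, Finset.mem_filter] at hg
    exact hg.1
  have hgmod : g % n = (m*b)%n := by
    rw [clsC, Finset.mem_filter] at hg
    exact hg.2
  have hb0 : 0 < b := by
    by_contra hb0
    push_neg at hb0
    interval_cases b
    have := H_pos hn hfn g hgH
    simp at hgmod
    exact absurd (Nat.dvd_of_mod_eq_zero hgmod) (hfn.1 g hgH)
  have hmem := (mem_cls_iff hco hm hn hfm hfn hb0 hb (H_pos hn hfn g hgH) hgmod).mp hgH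
  have hglt := H_lt_mb hco hm hn hfm hfn b hb g hgH hgmod
  -- now : use that the max element r + (k-1) n is < m*b
  -- simpler: directly: every element < m*b, and elements are r + t n for t < k
  -- g arbitrary won't do; instead use the iff with h := r + (k-1) n
  set k := (clsC m n H b).card with hk
  set r := (m*b) % n with hr
  have hcand : r + (k-1)*n < n*k + r := by
    have : (k-1)*n < n*k := by
      calc (k-1)*n < k*n := by
            apply Nat.mul_lt_mul_of_lt_of_le (by omega) (le_refl n) (by omega)
      _ = n*k := by ring
    omega
  have hr0 : 0 < r := by
    rcases Nat.eq_zero_or_pos r with hh0 | hh0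
    · exfalso
      exact not_n_dvd_mb hco hn hb0 hb (by rwa [Nat.dvd_iff_mod_eq_zero, ← hr])
    · exact hh0
  have hrn : r < n := by rw [hr]; exact Nat.mod_lt _ (by omega)
  have hcmod : (r + (k-1)*n) % n = (m*b) % n := by
    have : (r + (k-1)*n) % n = r % n := by simp [Nat.add_mul_mod_self_right]
    rw [this, Nat.mod_eq_of_lt hrn, hr]
  have hcH := (mem_cls_iff hco hm hn hfm hfn hb0 hb (by omega) hcmod).mpr hcand
  have hclt := H_lt_mb hco hm hn hfm hfn b hb _ hcH hcmod
  -- r + (k-1) n < m*b = n*(m*b/n) + r  ⟹  k ≤ m*b/n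
  have hdm := Nat.div_add_mod (m*b) n
  have : (k-1)*n < n*(m*b/n) := by omega
  have h2 : n*(k-1) < n*(m*b/n) := by
    have : n*(k-1) = (k-1)*n := by ring
    omega
  have := lt_of_mul_lt_mul_left h2 (Nat.zero_le n)
  omega

include hco hm hn hfm hfn in
lemma xOfH_dyck {b : ℕ} (hb : b < n) : n * xOfH m n H b ≤ m * b := by
  have hk := cls_card_le hco hm hn hfm hfn hb
  rw [xOfH]
  have hdm := Nat.div_add_mod (m*b) n
  have hd1 : n * (m*b/n - (clsC m n H b).card) + n * (clsC m n H b).card = n * (m*b/n) := by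
    rw [← Nat.left_distrib]
    congr 1
    omega
  omega

end xOfH

section xOfH2
variable {m n : ℕ} {H : Finset ℕ}
  (hco : Nat.Coprime m n) (hm : 0 < m) (hn : 0 < n)
  (hfm : IsFlush m H) (hfn : IsFlush n H)

lemma a_lt_m' (hm' : 0 < m) {a b : ℕ} (hb : b < n) (h3 : n*a < m*b) : a < m := by
  have h2 : m * b ≤ m * (n-1) := Nat.mul_le_mul_left m (by omega)
  have h4 : m * (n-1) + m = m * n := by
    have hc : (n-1) + 1 = n := by omega
    calc m * (n-1) + m = m * ((n-1)+1) := by ring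
    _ = m * n := by rw [hc]
  have h5 : n * a < n * m := by
    have hc : n * m = m * n := by ring
    omega
  exact lt_of_mul_lt_mul_left h5 (Nat.zero_le n)

include hco hm hn hfm hfn in
lemma xOfH_mono_succ {b : ℕ} (hb1 : b + 1 < n) : xOfH m n H b ≤ xOfH m n H (b+1) := by
  rcases Nat.eq_zero_or_pos b with rfl | hb0
  · have : xOfH m n H 0 = 0 := by simp [xOfH]
    omega
  set k := (clsC m n H (b+1)).card with hk
  set kb := (clsC m n H b).card with hkb'
  set qb := m*b/n with hqb
  set qb1 := m*(b+1)/n with hqb1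
  set rb := (m*b) % n with hrb
  set r1 := (m*(b+1)) % n with hr1
  have hkble : kb ≤ qb := cls_card_le hco hm hn hfm hfn (by omega)
  have hk1le : k ≤ qb1 := cls_card_le hco hm hn hfm hfn hb1
  have e1 : n*qb + rb = m*b := Nat.div_add_mod (m*b) n
  have e2 : n*qb1 + r1 = m*(b+1) := Nat.div_add_mod (m*(b+1)) n
  have e3 : m*(b+1) = m*b + m := by ring
  have hqm : qb ≤ qb1 := Nat.div_le_div_right (by omega)
  show qb - kb ≤ qb1 - k
  rcases Nat.eq_zero_or_pos k with hk0 | hk0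
  · omega
  -- k ≥ 1 : consider the largest element c of the (b+1)-class
  have hr10 : 0 < r1 := by
    rcases Nat.eq_zero_or_pos r1 with h0 | h0
    · exact absurd (by rwa [Nat.dvd_iff_mod_eq_zero, ← hr1] : n ∣ m*(b+1))
        (not_n_dvd_mb hco hn (by omega) hb1)
    · exact h0
  have hr1n : r1 < n := by rw [hr1]; exact Nat.mod_lt _ (by omega)
  set c := r1 + (k-1)*n with hc
  have hcmod : c % n = (m*(b+1)) % n := by
    have : c % n = r1 % n := by simp [hc, Nat.add_mul_mod_self_right]
    rw [this, Nat.mod_eq_of_lt hr1n, hr1]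
  have hcand : c < n*k + r1 := by
    have hd3 : (k-1)*n + n = k*n := by
      have hcc : k - 1 + 1 = k := by omega
      calc (k-1)*n + n = ((k-1)+1)*n := by ring
      _ = k*n := by rw [hcc]
    have hd4 : k*n = n*k := by ring
    omega
  have hcH : c ∈ H := (mem_cls_iff hco hm hn hfm hfn (by omega) hb1 (by omega) hcmod).mpr hcand
  have hd3 : (k-1)*n + n = k*n := by
    have hcc : k - 1 + 1 = k := by omega
    calc (k-1)*n + n = ((k-1)+1)*n := by ring
    _ = k*n := by rw [hcc]
  have hd4 : k*n = n*k := by ring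
  have d1 : n*(qb - kb) + n*kb = n*qb := by
    rw [← Nat.left_distrib]
    congr 1
    omega
  have d2 : n*(qb1 - k) + n*k = n*qb1 := by
    rw [← Nat.left_distrib]
    congr 1
    omega
  have hAB : n*(qb - kb) < n*(qb1 - k) + n := by
    rcases le_or_gt c m with hcase | hcase
    · -- c ≤ m, and c ≠ m since c ∈ H and m ∤ c
      have hcne : c ≠ m := by
        intro hceq
        exact hfm.1 c hcH ⟨1, by omega⟩
      omega
    · -- c > m
      have hmem : c - m ∈ H := hfm.2 c hcH hcase
      have hmod2 : (c - m) % n = (m*b) % n := by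
        have ee1 : (c - m) + m = c := by omega
        have : (c - m) + m ≡ m*b + m [MOD n] := by
          rw [ee1, ← e3]
          exact hcmod
        exact Nat.ModEq.add_right_cancel' m this
      have hcmlt := (mem_cls_iff hco hm hn hfm hfn (b := b) (h := c - m) hb0 (by omega) (by omega) hmod2).mp hmem
      rw [← hkb', ← hrb] at hcmlt
      have hm_eq : m + n*qb + rb = n*qb1 + r1 := by omega
      have hc2 : c + n = r1 + n*k := by omega
      have hs1 : c + n < m + n*kb + rb + n := by omega
      have hs2 : r1 + n*k + n*qb + rb < n*qb1 + r1 + n*kb + rb + n := by omega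
      omega
  have hd5 : n*(qb1 - k) + n = n*((qb1 - k) + 1) := by ring
  rw [hd5] at hAB
  have := lt_of_mul_lt_mul_left hAB (Nat.zero_le n)
  omega

include hco hm hn hfm hfn in
lemma xOfH_mono : ∀ a b, a ≤ b → b < n → xOfH m n H a ≤ xOfH m n H b := by
  intro a b hab
  induction b, hab using Nat.le_induction with
  | base => intro _; exact le_refl _
  | succ b hab ih =>
    intro hb
    exact le_trans (ih (by omega)) (xOfH_mono_succ hco hm hn hfm hfn hb)

include hco hm hn hfm hfn in
theorem AFin_xOfH : AFin m n (xOfH m n H) = H := by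
  ext h
  rw [mem_AFin]
  constructor
  · rintro ⟨b, hb, a, h1, h2, h3, rfl⟩
    have hb0 : 0 < b := mem_AFin_b_pos h3
    set kb := (clsC m n H b).card with hkb'
    set qb := m*b/n with hqb
    set rb := (m*b) % n with hrb
    have e1 : n*qb + rb = m*b := Nat.div_add_mod (m*b) n
    have hkble : kb ≤ qb := cls_card_le hco hm hn hfm hfn hb
    have hmod : (m*b - n*a) % n = (m*b) % n := by
      have : (m*b - n*a) + n*a = m*b := by omega
      have h4 : (m*b - n*a) + n*a ≡ (m*b - n*a) + 0 [MOD n] :=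
        Nat.ModEq.add_left _ ((Nat.modEq_zero_iff_dvd).mpr (Dvd.intro a rfl))
      calc (m*b - n*a) % n = ((m*b - n*a) + 0) % n := by rw [Nat.add_zero]
      _ = ((m*b - n*a) + n*a) % n := h4.symm
      _ = (m*b) % n := by rw [this]
    have hx : xOfH m n H b = qb - kb := rfl
    have hna : n*(qb - kb + 1) ≤ n*a := Nat.mul_le_mul_left n (by omega)
    have d1 : n*(qb - kb) + n*kb = n*qb := by
      rw [← Nat.left_distrib]
      congr 1
      omega
    have d6 : n*(qb - kb + 1) = n*(qb - kb) + n := by ring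
    have hgoal : m*b - n*a < n*kb + rb := by omega
    exact (mem_cls_iff hco hm hn hfm hfn (b := b) hb0 hb (by omega) hmod).mpr hgoal
  · intro hH
    have hpos : 0 < h := H_pos hn hfn h hH
    obtain ⟨b, hb, hmod⟩ := exists_res hco hn h
    have hb0 : 0 < b := by
      rcases Nat.eq_zero_or_pos b with rfl | h'
      · exfalso
        apply hfn.1 h hH
        apply Nat.dvd_of_mod_eq_zero
        simpa using hmod
      · exact h'
    have hlt : h < m*b := H_lt_mb hco hm hn hfm hfn b hb h hH hmod
    have hltk := (mem_cls_iff hco hm hn hfm hfn hb0 hb hpos hmod).mp hH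
    have hdvd : n ∣ m*b - h := (Nat.modEq_iff_dvd' (by omega)).mp hmod
    obtain ⟨a, ha⟩ := hdvd
    refine ⟨b, hb, a, ?_, ?_, by omega, by omega⟩
    · -- xOfH < a
      set kb := (clsC m n H b).card with hkb'
      set qb := m*b/n with hqb
      set rb := (m*b) % n with hrb
      have e1 : n*qb + rb = m*b := Nat.div_add_mod (m*b) n
      have hkble : kb ≤ qb := cls_card_le hco hm hn hfm hfn hb
      have d1 : n*(qb - kb) + n*kb = n*qb := by
        rw [← Nat.left_distrib]
        congr 1
        omega
      have hrbn : rb < n := by rw [hrb]; exact Nat.mod_lt _ (by omega)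
      have hgt : n*(qb - kb) < n*a := by omega
      have := lt_of_mul_lt_mul_left hgt (Nat.zero_le n)
      show xOfH m n H b < a
      have hx : xOfH m n H b = qb - kb := rfl
      omega
    · -- a ≤ m
      have : n*a < m*b := by omega
      have := a_lt_m' (n := n) hm hb this
      omega

end xOfH2

/-! ### Assembly -/

lemma ofX_congr {m n : ℕ} {x x' : ℕ → ℕ} (h : ∀ b < n, x b = x' b) :
    ofX m n x = ofX m n x' := by
  unfold ofX
  congr 1
  funext i
  apply decide_eq_decide.mpr
  constructor
  · rintro ⟨b, hb, hi⟩
    exact ⟨b, hb, by rw [← h b hb]; exact hi⟩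
  · rintro ⟨b, hb, hi⟩
    exact ⟨b, hb, by rw [h b hb]; exact hi⟩

section assembly
variable {m n : ℕ} (hco : Nat.Coprime m n) (hm : 0 < m) (hn : 0 < n)

include hco hm hn in
lemma A_props (D : List Bool) :
    (∀ h ∈ AFin m n (fun b => southX D b), 0 < h) ∧
      IsFlush m (AFin m n (fun b => southX D b)) ∧
      IsFlush n (AFin m n (fun b => southX D b)) :=
  ⟨fun _ hh => AFin_pos hh,
    AFin_flush_m hco hm hn (fun a b hab _ => southX_mono hab),
    AFin_flush_n hco hm hn⟩

noncomputable def alphaFun (m n : ℕ) (hco : Nat.Coprime m n) (hm : 0 < m) (hn : 0 < n) :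
    {D : List Bool // IsDyck m n D} →
      {L : List ℕ // IsPartition L ∧ IsCore m L ∧ IsCore n L} := fun D =>
  ⟨partOfH (AFin m n (fun b => southX D.1 b)), by
    obtain ⟨hpos, hfm', hfn'⟩ := A_props hco hm hn D.1
    refine ⟨isPartition_partOfH hpos, ?_, ?_⟩
    · rw [isCore_iff_flush hm (isPartition_partOfH hpos), firstColHooks_partOfH hpos]
      exact hfm'
    · rw [isCore_iff_flush hn (isPartition_partOfH hpos), firstColHooks_partOfH hpos]
      exact hfn'⟩

noncomputable def betaFun (m n : ℕ) (hco : Nat.Coprime m n) (hm : 0 < m) (hn : 0 < n) :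
    {L : List ℕ // IsPartition L ∧ IsCore m L ∧ IsCore n L} →
      {D : List Bool // IsDyck m n D} := fun L =>
  ⟨ofX m n (xOfH m n (firstColHooks L.1)), by
    obtain ⟨hL, hcm, hcn⟩ := L.2
    have hfm' : IsFlush m (firstColHooks L.1) := (isCore_iff_flush hm hL).mp hcm
    have hfn' : IsFlush n (firstColHooks L.1) := (isCore_iff_flush hn hL).mp hcn
    exact isDyck_ofX (xOfH_mono hco hm hn hfm' hfn')
      (fun b hb => xOfH_dyck hco hm hn hfm' hfn' hb) hm hn⟩

include hco hm hn in
lemma alpha_left_inverse :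
    Function.LeftInverse (betaFun m n hco hm hn) (alphaFun m n hco hm hn) := by
  intro D
  obtain ⟨hpos, hfm', hfn'⟩ := A_props hco hm hn D.1
  apply Subtype.ext
  show ofX m n (xOfH m n (firstColHooks (partOfH (AFin m n (fun b => southX D.1 b))))) = D.1
  rw [firstColHooks_partOfH hpos]
  have hP : IsPath m n D.1 := D.2.1
  have hdyD : ∀ b < n, n * southX D.1 b ≤ m * b := (isDyck_iff_southX hP).mp D.2
  have hAA : AFin m n (xOfH m n (AFin m n (fun b => southX D.1 b))) =
      AFin m n (fun b => southX D.1 b) := AFin_xOfH hco hm hn hfm' hfn'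
  have heq : ∀ b < n, xOfH m n (AFin m n (fun b => southX D.1 b)) b = southX D.1 b := by
    intro b hb
    exact AFin_inj hco hm hn
      (fun b hb => xOfH_dyck hco hm hn hfm' hfn' hb) hdyD hAA hb
  rw [ofX_congr heq]
  exact ofX_southX hP

include hco hm hn in
lemma alpha_right_inverse :
    Function.RightInverse (betaFun m n hco hm hn) (alphaFun m n hco hm hn) := by
  intro L
  obtain ⟨hL, hcm, hcn⟩ := L.2
  have hfm' : IsFlush m (firstColHooks L.1) := (isCore_iff_flush hm hL).mp hcm
  have hfn' : IsFlush n (firstColHooks L.1) := (isCore_iff_flush hn hL).mp hcn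
  apply Subtype.ext
  show partOfH (AFin m n
      (fun b => southX (ofX m n (xOfH m n (firstColHooks L.1))) b)) = L.1
  have hmono := xOfH_mono hco hm hn hfm' hfn'
  have hdy : ∀ b < n, n * xOfH m n (firstColHooks L.1) b ≤ m*b :=
    fun b hb => xOfH_dyck hco hm hn hfm' hfn' hb
  have hsx : ∀ b < n, southX (ofX m n (xOfH m n (firstColHooks L.1))) b =
      xOfH m n (firstColHooks L.1) b :=
    fun b hb => southX_ofX hmono hdy hm hn hb
  rw [AFin_congr hsx, AFin_xOfH hco hm hn hfm' hfn']
  exact partOfH_firstColHooks hL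

end assembly

/-- Anderson's bijection: for coprime positive `m, n` there is a
bijection `α` from `(m,n)`-Dyck paths to `(m,n)`-cores such that the
first-column hook lengths of `α(D)` are exactly the positive ranks of the
lattice points lying strictly to the right of `D`. -/
theorem anderson_bijection (m n : ℕ) (hm : 0 < m) (hn : 0 < n)
    (hco : Nat.Coprime m n) :
    ∃ α : {D : List Bool // IsDyck m n D} →
        {L : List ℕ // IsPartition L ∧ IsCore m L ∧ IsCore n L},
      Function.Bijective α ∧
        ∀ D, (↑(firstColHooks (α D).1) : Set ℕ) = andersonSet m n D.1 := by
  refine ⟨alphaFun m n hco hm hn, ?_, ?_⟩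
  · exact Function.bijective_iff_has_inverse.mpr
      ⟨betaFun m n hco hm hn, alpha_left_inverse hco hm hn, alpha_right_inverse hco hm hn⟩
  · intro D
    obtain ⟨hpos, hfm', hfn'⟩ := A_props hco hm hn D.1
    show (↑(firstColHooks (partOfH (AFin m n (fun b => southX D.1 b)))) : Set ℕ) = _
    rw [firstColHooks_partOfH hpos]
    exact coe_AFin_eq_andersonSet D.2.1 hm
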